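/- Let N ≥ 2, d ≥ 2 be integers, let ψ : (Fin N → Fin d) → ℂ be a unit vector that is genuinely multipartite entangled (GME), and let 𝓕 be a family of subsets of Fin N. If there exists a nonempty proper subset J ⊆ Fin N such that every F ∈ 𝓕 satisfies F ⊆ J or F ⊆ Jᶜ (i.e., the hypergraph G_𝓕 is disconnected by the cut J), then ψ is not 𝓕-UDP: there exists a unit vector φ : (Fin N → Fin d) → ℂ with ρ_F(φ) = ρ_F(ψ) for every F ∈ 𝓕, yet φ ≠ c • ψ for every scalar c : ℂ. -/

import Mathlib

open Finset

/-- Combine `x` defined on `S` with `z` defined on the complement of `S`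
into a full assignment `Fin N → Fin d`. -/
def joinFun {N d : ℕ} (S : Finset (Fin N))
    (x : {i // i ∈ S} → Fin d) (z : {i // i ∉ S} → Fin d) : Fin N → Fin d :=
  fun i => if h : i ∈ S then x ⟨i, h⟩ else z ⟨i, h⟩

/-- The marginal (reduced density matrix) of the pure state `ψ` on the parties `S`. -/
noncomputable def marginal {N d : ℕ} (S : Finset (Fin N)) (ψ : (Fin N → Fin d) → ℂ)
    (x y : {i // i ∈ S} → Fin d) : ℂ :=
  ∑ z : {i // i ∉ S} → Fin d,
    ψ (joinFun S x z) * (starRingEnd ℂ) (ψ (joinFun S y z))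

/-- `ψ` is a unit vector. -/
def UnitVec {N d : ℕ} (ψ : (Fin N → Fin d) → ℂ) : Prop :=
  ∑ x, ‖ψ x‖ ^ 2 = 1

/-- `ψ` is genuinely multipartite entangled. -/
def GME {N d : ℕ} (ψ : (Fin N → Fin d) → ℂ) : Prop :=
  ∀ J : Finset (Fin N), J.Nonempty → J ≠ Finset.univ →
    ¬ ∃ (α : ({i // i ∈ J} → Fin d) → ℂ) (β : ({i // i ∉ J} → Fin d) → ℂ),
      ∀ x z, ψ (joinFun J x z) = α x * β z

/-- `ψ` is uniquely determined by the family of marginals `𝓕` among pure states. -/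
def UDP {N d : ℕ} (𝓕 : Finset (Finset (Fin N))) (ψ : (Fin N → Fin d) → ℂ) : Prop :=
  ∀ φ : (Fin N → Fin d) → ℂ, UnitVec φ →
    (∀ F ∈ 𝓕, marginal F φ = marginal F ψ) →
    ∃ c : ℂ, ‖c‖ = 1 ∧ φ = c • ψ

def splitEquiv {N d : ℕ} (F G : Finset (Fin N)) (hFG : F ⊆ G) :
    ({i : Fin N // i ∉ F} → Fin d) ≃
      (({i : {i : Fin N // i ∉ F} // i.1 ∈ G} → Fin d) × ({i : Fin N // i ∉ G} → Fin d)) where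
  toFun z := (fun i => z i.1, fun i => z ⟨i.1, fun h => i.2 (hFG h)⟩)
  invFun p i := if h : i.1 ∈ G then p.1 ⟨i, h⟩ else p.2 ⟨i.1, h⟩
  left_inv z := by
    funext i
    dsimp only
    split <;> rfl
  right_inv p := by
    refine Prod.ext ?_ ?_ <;> funext i <;> dsimp only
    · rw [dif_pos i.2]
    · rw [dif_neg i.2]

def glue {N d : ℕ} (F G : Finset (Fin N))
    (x : {i : Fin N // i ∈ F} → Fin d) (w : {i : {i : Fin N // i ∉ F} // i.1 ∈ G} → Fin d) :
    {i : Fin N // i ∈ G} → Fin d :=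
  fun i => if h : i.1 ∈ F then x ⟨i.1, h⟩ else w ⟨⟨i.1, h⟩, i.2⟩

lemma join_split {N d : ℕ} (F G : Finset (Fin N)) (hFG : F ⊆ G)
    (x : {i : Fin N // i ∈ F} → Fin d)
    (w : {i : {i : Fin N // i ∉ F} // i.1 ∈ G} → Fin d) (u : {i : Fin N // i ∉ G} → Fin d) :
    joinFun F x ((splitEquiv F G hFG).symm (w, u)) = joinFun G (glue F G x w) u := by
  funext i
  by_cases h1 : i ∈ F
  · simp [joinFun, glue, h1, hFG h1]
  · by_cases h2 : i ∈ G
    · simp [joinFun, glue, splitEquiv, h1, h2]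
    · simp [joinFun, glue, splitEquiv, h1, h2]

lemma marginal_mono {N d : ℕ} (F G : Finset (Fin N)) (hFG : F ⊆ G)
    (φ ψ : (Fin N → Fin d) → ℂ) (h : marginal G φ = marginal G ψ) :
    marginal F φ = marginal F ψ := by
  have key : ∀ χ : (Fin N → Fin d) → ℂ, ∀ x y,
      marginal F χ x y = ∑ w : {i : {i : Fin N // i ∉ F} // i.1 ∈ G} → Fin d,
        marginal G χ (glue F G x w) (glue F G y w) := by
    intro χ x y
    unfold marginal
    rw [← Equiv.sum_comp (splitEquiv F G hFG).symm
      (fun z => χ (joinFun F x z) * (starRingEnd ℂ) (χ (joinFun F y z))),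
      Fintype.sum_prod_type]
    exact Finset.sum_congr rfl fun w _ => Finset.sum_congr rfl fun u _ => by
      rw [join_split F G hFG x w u, join_split F G hFG y w u]
  funext x y
  rw [key φ x y, key ψ x y]
  simp [h]

def toCompl {N d : ℕ} (J : Finset (Fin N)) (x : {i : Fin N // i ∈ Jᶜ} → Fin d) :
    {i : Fin N // i ∉ J} → Fin d :=
  fun i => x ⟨i.1, by simpa using i.2⟩

lemma join_compl {N d : ℕ} (J : Finset (Fin N)) (x : {i : Fin N // i ∈ Jᶜ} → Fin d)
    (u : {i : Fin N // i ∉ Jᶜ} → Fin d) :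
    joinFun Jᶜ x u = joinFun J (fun a => u ⟨a.1, by simpa using a.2⟩) (toCompl J x) := by
  funext i
  by_cases h : i ∈ J
  · simp [joinFun, toCompl, h]
  · simp [joinFun, toCompl, h]

lemma marginal_compl {N d : ℕ} (J : Finset (Fin N)) (χ : (Fin N → Fin d) → ℂ)
    (x y : {i : Fin N // i ∈ Jᶜ} → Fin d) :
    marginal Jᶜ χ x y = ∑ a : {i : Fin N // i ∈ J} → Fin d,
      χ (joinFun J a (toCompl J x)) * (starRingEnd ℂ) (χ (joinFun J a (toCompl J y))) := by
  unfold marginal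
  rw [← Equiv.sum_comp (Equiv.arrowCongr
    (Equiv.subtypeEquivRight (fun i => by simp : ∀ i : Fin N, i ∈ J ↔ i ∉ Jᶜ))
    (Equiv.refl (Fin d)))
    (fun u => χ (joinFun Jᶜ x u) * (starRingEnd ℂ) (χ (joinFun Jᶜ y u)))]
  refine Finset.sum_congr rfl fun a _ => ?_
  rw [join_compl, join_compl]
  rfl

lemma sum_join {N d : ℕ} (S : Finset (Fin N)) {α : Type*} [AddCommMonoid α]
    (f : (Fin N → Fin d) → α) :
    ∑ t, f t = ∑ x : {i // i ∈ S} → Fin d, ∑ z : {i // i ∉ S} → Fin d, f (joinFun S x z) := by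
  rw [← Equiv.sum_comp (Equiv.piEquivPiSubtypeProd (fun i => i ∈ S) (fun _ => Fin d)).symm f,
    Fintype.sum_prod_type]
  rfl

section core
variable {N d : ℕ} (J : Finset (Fin N)) (ψ : (Fin N → Fin d) → ℂ)

-- abbreviations
local notation "X" => ({i : Fin N // i ∈ J} → Fin d)
local notation "Z" => ({i : Fin N // i ∉ J} → Fin d)

lemma unitVec_iff (χ : (Fin N → Fin d) → ℂ) :
    UnitVec χ ↔ ∑ t, χ t * (starRingEnd ℂ) (χ t) = 1 := by
  unfold UnitVec
  constructor
  · intro h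
    have : ((∑ t, ‖χ t‖ ^ 2 : ℝ) : ℂ) = 1 := by rw [h]; norm_num
    rw [← this, Complex.ofReal_sum]
    refine Finset.sum_congr rfl fun t _ => ?_
    rw [Complex.sq_norm, Complex.mul_conj]
  · intro h
    have : ((∑ t, ‖χ t‖ ^ 2 : ℝ) : ℂ) = 1 := by
      rw [Complex.ofReal_sum, ← h]
      refine Finset.sum_congr rfl fun t _ => ?_
      rw [Complex.sq_norm, Complex.mul_conj]
    exact_mod_cast this

theorem core_construction (hψ : UnitVec ψ)
    (hent : ¬ ∃ (α : ({i : Fin N // i ∈ J} → Fin d) → ℂ)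
      (β : ({i : Fin N // i ∉ J} → Fin d) → ℂ),
      ∀ x z, ψ (joinFun J x z) = α x * β z) :
    ∃ φ : (Fin N → Fin d) → ℂ, UnitVec φ ∧
      marginal J φ = marginal J ψ ∧
      (∀ z z' : ({i : Fin N // i ∉ J} → Fin d),
        ∑ a : ({i : Fin N // i ∈ J} → Fin d),
          φ (joinFun J a z) * (starRingEnd ℂ) (φ (joinFun J a z'))
        = ∑ a : ({i : Fin N // i ∈ J} → Fin d),
          ψ (joinFun J a z) * (starRingEnd ℂ) (ψ (joinFun J a z'))) ∧
      ∀ c : ℂ, φ ≠ c • ψ := by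
  classical
  set M : ({i : Fin N // i ∈ J} → Fin d) → ({i : Fin N // i ∉ J} → Fin d) → ℂ :=
    fun a z => ψ (joinFun J a z) with hM
  set A : Matrix ({i : Fin N // i ∈ J} → Fin d) ({i : Fin N // i ∈ J} → Fin d) ℂ :=
    Matrix.of (fun a b => marginal J ψ a b) with hA_def
  have hAab : ∀ a b, A a b = ∑ z, M a z * (starRingEnd ℂ) (M b z) := fun a b => rfl
  have hA : A.IsHermitian := by
    unfold Matrix.IsHermitian
    ext a b
    rw [Matrix.conjTranspose_apply, hAab, hAab, star_sum]
    refine Finset.sum_congr rfl fun z _ => ?_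
    simp only [RingHom.id_apply, map_mul, Complex.star_def, Complex.conj_conj]
    ring
  -- trace is 1
  have htr : ∑ a, A a a = 1 := by
    have h1 := (unitVec_iff ψ).1 hψ
    rw [sum_join J (fun t => ψ t * (starRingEnd ℂ) (ψ t))] at h1
    rw [← h1]
    exact Finset.sum_congr rfl fun a _ => (hAab a a)
  have hAne : A ≠ 0 := by
    intro h0
    rw [h0] at htr
    simp at htr
  -- a nonzero eigenvalue
  obtain ⟨k, hk⟩ : ∃ k, hA.eigenvalues k ≠ 0 := by
    by_contra hall
    push_neg at hall
    apply hAne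
    have := hA.spectral_theorem
    have hdiag : Matrix.diagonal (RCLike.ofReal ∘ hA.eigenvalues) =
        (0 : Matrix _ _ ℂ) := by
      ext a b
      by_cases hab : a = b
      · subst hab; simp [hall a]
      · simp [Matrix.diagonal_apply_ne _ hab]
    rw [this, hdiag]
    simp
  set lam : ℝ := hA.eigenvalues k with hlam_def
  set v : ({i : Fin N // i ∈ J} → Fin d) → ℂ := ⇑(hA.eigenvectorBasis k) with hv_def
  have heig : ∀ a, ∑ b, A a b * v b = (lam : ℂ) * v a := by
    intro a
    have := congrFun (hA.mulVec_eigenvectorBasis k) a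
    simpa [Matrix.mulVec, dotProduct, Complex.real_smul] using this
  have hvnorm : ∑ a, (starRingEnd ℂ) (v a) * v a = 1 := by
    have h1 : ‖hA.eigenvectorBasis k‖ = 1 := hA.eigenvectorBasis.orthonormal.1 k
    have h2 : (inner ℂ (hA.eigenvectorBasis k) (hA.eigenvectorBasis k) : ℂ) = 1 := by
      rw [inner_self_eq_norm_sq_to_K, h1]; norm_num
    rw [← h2, PiLp.inner_apply]
    simp only [RCLike.inner_apply]
    exact Finset.sum_congr rfl fun a _ => mul_comm _ _
  -- B and identities
  set B : ({i : Fin N // i ∉ J} → Fin d) → ℂ := fun z => ∑ a, (starRingEnd ℂ) (v a) * M a z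
    with hB_def
  have hBconj : ∀ z, (starRingEnd ℂ) (B z) = ∑ a, v a * (starRingEnd ℂ) (M a z) := by
    intro z
    rw [hB_def]
    simp only [map_sum, map_mul, Complex.conj_conj]
  -- (I4) ∑ z, M a z * conj (B z) = lam * v a
  have hI4 : ∀ a, ∑ z, M a z * (starRingEnd ℂ) (B z) = (lam : ℂ) * v a := by
    intro a
    calc ∑ z, M a z * (starRingEnd ℂ) (B z)
        = ∑ z, ∑ b, v b * (M a z * (starRingEnd ℂ) (M b z)) := by
          refine Finset.sum_congr rfl fun z _ => ?_
          rw [hBconj, Finset.mul_sum]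
          refine Finset.sum_congr rfl fun b _ => by ring
      _ = ∑ b, v b * A a b := by
          rw [Finset.sum_comm]
          refine Finset.sum_congr rfl fun b _ => ?_
          rw [hAab, Finset.mul_sum]
      _ = (lam : ℂ) * v a := by
          rw [← heig a]
          exact Finset.sum_congr rfl fun b _ => by ring
  -- hermitian entrywise
  have hAherm : ∀ a b, A a b = (starRingEnd ℂ) (A b a) := by
    intro a b
    have := congrFun (congrFun hA a) b
    rw [Matrix.conjTranspose_apply] at this
    exact this.symm
  -- (I5) ∑ z, B z * conj (M b z) = lam * conj (v b)
  have hI5 : ∀ b, ∑ z, B z * (starRingEnd ℂ) (M b z) = (lam : ℂ) * (starRingEnd ℂ) (v b) := by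
    intro b
    have : ∑ z, B z * (starRingEnd ℂ) (M b z)
        = (starRingEnd ℂ) (∑ z, M b z * (starRingEnd ℂ) (B z)) := by
      rw [map_sum]
      refine Finset.sum_congr rfl fun z _ => ?_
      simp only [map_mul, Complex.conj_conj]
      ring
    rw [this, hI4 b, map_mul, Complex.conj_ofReal]
  -- (I6) ∑ z, B z * conj (B z) = lam
  have hI6 : ∑ z, B z * (starRingEnd ℂ) (B z) = (lam : ℂ) := by
    calc ∑ z, B z * (starRingEnd ℂ) (B z)
        = ∑ z, ∑ b, v b * (B z * (starRingEnd ℂ) (M b z)) := by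
          refine Finset.sum_congr rfl fun z _ => ?_
          rw [hBconj, Finset.mul_sum]
          refine Finset.sum_congr rfl fun b _ => by ring
      _ = ∑ b, v b * ((lam : ℂ) * (starRingEnd ℂ) (v b)) := by
          rw [Finset.sum_comm]
          refine Finset.sum_congr rfl fun b _ => ?_
          rw [← hI5 b, Finset.mul_sum]
      _ = (lam : ℂ) * ∑ b, (starRingEnd ℂ) (v b) * v b := by
          rw [Finset.mul_sum]
          exact Finset.sum_congr rfl fun b _ => by ring
      _ = (lam : ℂ) := by rw [hvnorm, mul_one]
  -- define φ
  set φ : (Fin N → Fin d) → ℂ := fun t =>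
    2 * v (fun i => t i.1) * B (fun i => t i.1) - ψ t with hφ_def
  have hφjoin : ∀ a z, φ (joinFun J a z) = 2 * v a * B z - M a z := by
    intro a z
    have h1 : (fun i : {i : Fin N // i ∈ J} => joinFun J a z i.1) = a := by
      funext i
      simp [joinFun, i.2]
    have h2 : (fun i : {i : Fin N // i ∉ J} => joinFun J a z i.1) = z := by
      funext i
      simp [joinFun, i.2]
    rw [hφ_def]
    dsimp only
    rw [h1, h2]
  -- (G_J) same J-marginal
  have hGJ : ∀ a b, ∑ z, φ (joinFun J a z) * (starRingEnd ℂ) (φ (joinFun J b z)) = A a b := by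
    intro a b
    calc ∑ z, φ (joinFun J a z) * (starRingEnd ℂ) (φ (joinFun J b z))
        = ∑ z, ((4 * (v a * (starRingEnd ℂ) (v b))) * (B z * (starRingEnd ℂ) (B z))
            - (2 * v a) * (B z * (starRingEnd ℂ) (M b z))
            - (2 * (starRingEnd ℂ) (v b)) * (M a z * (starRingEnd ℂ) (B z))
            + M a z * (starRingEnd ℂ) (M b z)) := by
          refine Finset.sum_congr rfl fun z _ => ?_
          rw [hφjoin, hφjoin]
          simp only [map_sub, map_mul, map_ofNat]
          ring
      _ = (4 * (v a * (starRingEnd ℂ) (v b))) * ∑ z, B z * (starRingEnd ℂ) (B z)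
            - (2 * v a) * ∑ z, B z * (starRingEnd ℂ) (M b z)
            - (2 * (starRingEnd ℂ) (v b)) * ∑ z, M a z * (starRingEnd ℂ) (B z)
            + ∑ z, M a z * (starRingEnd ℂ) (M b z) := by
          rw [Finset.sum_add_distrib, Finset.sum_sub_distrib, Finset.sum_sub_distrib,
            ← Finset.mul_sum, ← Finset.mul_sum, ← Finset.mul_sum]
      _ = A a b := by
          rw [hI6, hI5 b, hI4 a, ← hAab]
          ring
  -- (G_Z) same Jᶜ-gram
  have hGZ : ∀ z z', ∑ a, φ (joinFun J a z) * (starRingEnd ℂ) (φ (joinFun J a z'))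
      = ∑ a, M a z * (starRingEnd ℂ) (M a z') := by
    intro z z'
    have hxz : ∀ z', ∑ a, v a * (starRingEnd ℂ) (M a z') = (starRingEnd ℂ) (B z') := by
      intro z'
      rw [hBconj]
    have hxz2 : ∀ z, ∑ a, (starRingEnd ℂ) (v a) * M a z = B z := fun _ => rfl
    calc ∑ a, φ (joinFun J a z) * (starRingEnd ℂ) (φ (joinFun J a z'))
        = ∑ a, ((4 * (B z * (starRingEnd ℂ) (B z'))) * (v a * (starRingEnd ℂ) (v a))
            - (2 * B z) * (v a * (starRingEnd ℂ) (M a z'))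
            - (2 * (starRingEnd ℂ) (B z')) * ((starRingEnd ℂ) (v a) * M a z)
            + M a z * (starRingEnd ℂ) (M a z')) := by
          refine Finset.sum_congr rfl fun a _ => ?_
          rw [hφjoin, hφjoin]
          simp only [map_sub, map_mul, map_ofNat]
          ring
      _ = (4 * (B z * (starRingEnd ℂ) (B z'))) * ∑ a, v a * (starRingEnd ℂ) (v a)
            - (2 * B z) * ∑ a, v a * (starRingEnd ℂ) (M a z')
            - (2 * (starRingEnd ℂ) (B z')) * ∑ a, (starRingEnd ℂ) (v a) * M a z
            + ∑ a, M a z * (starRingEnd ℂ) (M a z') := by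
          rw [Finset.sum_add_distrib, Finset.sum_sub_distrib, Finset.sum_sub_distrib,
            ← Finset.mul_sum, ← Finset.mul_sum, ← Finset.mul_sum]
      _ = ∑ a, M a z * (starRingEnd ℂ) (M a z') := by
          have hvv : ∑ a, v a * (starRingEnd ℂ) (v a) = 1 := by
            rw [← hvnorm]
            exact Finset.sum_congr rfl fun a _ => by ring
          rw [hvv, hxz z', hxz2 z]
          ring
  refine ⟨φ, ?_, ?_, ?_, ?_⟩
  · -- UnitVec φ
    rw [unitVec_iff]
    rw [sum_join J (fun t => φ t * (starRingEnd ℂ) (φ t)), Finset.sum_comm]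
    have h1 := (unitVec_iff ψ).1 hψ
    rw [sum_join J (fun t => ψ t * (starRingEnd ℂ) (ψ t)), Finset.sum_comm] at h1
    rw [← h1]
    exact Finset.sum_congr rfl fun z _ => hGZ z z
  · -- marginal J
    funext a b
    exact (hGJ a b).trans (hAab a b).symm |>.trans rfl
  · exact hGZ
  · -- not proportional
    intro c hc
    obtain ⟨z0, hz0⟩ : ∃ z0, B z0 ≠ 0 := by
      by_contra hall
      push_neg at hall
      apply hk
      have : ∑ z, B z * (starRingEnd ℂ) (B z) = 0 := by
        refine Finset.sum_eq_zero fun z _ => by rw [hall z, zero_mul]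
      rw [this] at hI6
      exact_mod_cast hI6.symm
    obtain ⟨a0, ha0⟩ : ∃ a0, v a0 ≠ 0 := by
      by_contra hall
      push_neg at hall
      have : ∑ a, (starRingEnd ℂ) (v a) * v a = 0 :=
        Finset.sum_eq_zero fun a _ => by rw [hall a, mul_zero]
      rw [this] at hvnorm
      norm_num at hvnorm
    have hpt : ∀ a z, 2 * v a * B z = (c + 1) * M a z := by
      intro a z
      have := congrFun hc (joinFun J a z)
      rw [hφjoin] at this
      have hMz : (c • ψ) (joinFun J a z) = c * M a z := rfl
      rw [hMz] at this
      linear_combination this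
    by_cases hc1 : c + 1 = 0
    · have := hpt a0 z0
      rw [hc1, zero_mul] at this
      have := mul_eq_zero.1 this
      rcases this with h | h
      · rcases mul_eq_zero.1 h with h' | h'
        · norm_num at h'
        · exact ha0 h'
      · exact hz0 h
    · apply hent
      refine ⟨v, fun z => 2 * B z / (c + 1), fun a z => ?_⟩
      have h2 : 2 * v a * B z = (c + 1) * ψ (joinFun J a z) := hpt a z
      rw [mul_comm (v a), div_mul_eq_mul_div, eq_comm, div_eq_iff hc1]
      linear_combination h2
end core


/-- If the hypergraph of `𝓕` is disconnected by a cut `J`, then a GME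
pure state `ψ` is not `𝓕`-UDP: some unit vector shares all marginals over `𝓕` with `ψ`
but is not a scalar multiple of `ψ`. -/
theorem gme_disconnected_not_UDP (N d : ℕ) (hN : 2 ≤ N) (hd : 2 ≤ d)
    (ψ : (Fin N → Fin d) → ℂ) (hψ : UnitVec ψ) (hGME : GME ψ)
    (𝓕 : Finset (Finset (Fin N)))
    (J : Finset (Fin N)) (hJne : J.Nonempty) (hJprop : J ≠ Finset.univ)
    (hcut : ∀ F ∈ 𝓕, F ⊆ J ∨ F ⊆ Jᶜ) :
    ∃ φ : (Fin N → Fin d) → ℂ, UnitVec φ ∧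
      (∀ F ∈ 𝓕, marginal F φ = marginal F ψ) ∧
      ∀ c : ℂ, φ ≠ c • ψ := by
  obtain ⟨φ, hunit, hmJ, hgram, hprop⟩ :=
    core_construction J ψ hψ (hGME J hJne hJprop)
  have hmJc : marginal Jᶜ φ = marginal Jᶜ ψ := by
    funext x y
    rw [marginal_compl, marginal_compl]
    exact hgram (toCompl J x) (toCompl J y)
  refine ⟨φ, hunit, ?_, hprop⟩
  intro F hF
  rcases hcut F hF with h | h
  · exact marginal_mono F J h φ ψ hmJ
  · exact marginal_mono F Jᶜ h φ ψ hmJc
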